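/- Let R be a commutative ring and X a Thomason subset of Spec R, i.e., a union of sets V(I) with I finitely generated. Then G = {J ideal | there exists a finitely generated ideal I ⊆ J with V(I) ⊆ X} is a finitely generated Gabriel topology: it is a filter of ideals with a basis of finitely generated ideals closed under ideal products. -/

import Mathlib

/-- Let `R` be a commutative ring and `X` a Thomason subset of
`Spec R`, i.e. a union of sets `V(I)` with `I` finitely generated.  Then
`G = {J | ∃ f.g. I ⊆ J with V(I) ⊆ X}` is a finitely generated Gabriel
topology: a (nonempty, upward closed, intersection closed) filter of ideals
with a basis of finitely generated ideals that is closed under ideal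
products. -/
theorem thomason_set_gives_gabriel_topology (R : Type*) [CommRing R]
    (X : Set (PrimeSpectrum R))
    (hX : ∃ S : Set (Ideal R), (∀ I ∈ S, I.FG) ∧
      X = ⋃ I ∈ S, PrimeSpectrum.zeroLocus (I : Set R)) :
    (({J : Ideal R | ∃ I : Ideal R, I.FG ∧ I ≤ J ∧
        PrimeSpectrum.zeroLocus (I : Set R) ⊆ X} : Set (Ideal R)).Nonempty) ∧
    (∀ I ∈ {J : Ideal R | ∃ I : Ideal R, I.FG ∧ I ≤ J ∧
        PrimeSpectrum.zeroLocus (I : Set R) ⊆ X}, ∀ J : Ideal R, I ≤ J →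
      J ∈ {J : Ideal R | ∃ I : Ideal R, I.FG ∧ I ≤ J ∧
        PrimeSpectrum.zeroLocus (I : Set R) ⊆ X}) ∧
    (∀ I ∈ {J : Ideal R | ∃ I : Ideal R, I.FG ∧ I ≤ J ∧
        PrimeSpectrum.zeroLocus (I : Set R) ⊆ X},
      ∀ J ∈ {J : Ideal R | ∃ I : Ideal R, I.FG ∧ I ≤ J ∧
        PrimeSpectrum.zeroLocus (I : Set R) ⊆ X},
      I ⊓ J ∈ {J : Ideal R | ∃ I : Ideal R, I.FG ∧ I ≤ J ∧
        PrimeSpectrum.zeroLocus (I : Set R) ⊆ X}) ∧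
    (∀ J ∈ {J : Ideal R | ∃ I : Ideal R, I.FG ∧ I ≤ J ∧
        PrimeSpectrum.zeroLocus (I : Set R) ⊆ X},
      ∃ I ∈ {J : Ideal R | ∃ I : Ideal R, I.FG ∧ I ≤ J ∧
        PrimeSpectrum.zeroLocus (I : Set R) ⊆ X}, I ≤ J ∧ I.FG) ∧
    (∀ I ∈ {J : Ideal R | ∃ I : Ideal R, I.FG ∧ I ≤ J ∧
        PrimeSpectrum.zeroLocus (I : Set R) ⊆ X},
      ∀ J ∈ {J : Ideal R | ∃ I : Ideal R, I.FG ∧ I ≤ J ∧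
        PrimeSpectrum.zeroLocus (I : Set R) ⊆ X},
      I * J ∈ {J : Ideal R | ∃ I : Ideal R, I.FG ∧ I ≤ J ∧
        PrimeSpectrum.zeroLocus (I : Set R) ⊆ X}) := by
  have htop : (⊤ : Ideal R).FG := ⟨{1}, by simp⟩
  refine ⟨⟨⊤, ⊤, htop, le_rfl, by simp⟩, ?_, ?_, ?_, ?_⟩
  · rintro I ⟨I', hfg, hle, hV⟩ J hIJ
    exact ⟨I', hfg, hle.trans hIJ, hV⟩
  · rintro I ⟨I', hfg, hle, hV⟩ J ⟨J', hfg', hle', hV'⟩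
    refine ⟨I' * J', Submodule.FG.mul hfg hfg', le_inf (le_trans Ideal.mul_le_right hle')
      (le_trans Ideal.mul_le_left hle) |>.trans ?_, ?_⟩
    · exact le_inf inf_le_right inf_le_left
    · rw [show ((I' * J' : Ideal R) : Set R) = _ from rfl]
      calc PrimeSpectrum.zeroLocus ((I' * J' : Ideal R) : Set R)
          = PrimeSpectrum.zeroLocus I' ∪ PrimeSpectrum.zeroLocus J' :=
            PrimeSpectrum.zeroLocus_mul I' J'
        _ ⊆ X := Set.union_subset hV hV'
  · rintro J ⟨I', hfg, hle, hV⟩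
    exact ⟨I', ⟨I', hfg, le_rfl, hV⟩, hle, hfg⟩
  · rintro I ⟨I', hfg, hle, hV⟩ J ⟨J', hfg', hle', hV'⟩
    refine ⟨I' * J', Submodule.FG.mul hfg hfg', Ideal.mul_mono hle hle', ?_⟩
    calc PrimeSpectrum.zeroLocus ((I' * J' : Ideal R) : Set R)
        = PrimeSpectrum.zeroLocus I' ∪ PrimeSpectrum.zeroLocus J' :=
          PrimeSpectrum.zeroLocus_mul I' J'
      _ ⊆ X := Set.union_subset hV hV'
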